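/- Assume 𝔼[e^{-sX}] < ∞ for all s ∈ ℝ and that β is in the strong disorder regime, i.e. f(β) < 0 where f(β) = log(ℓ−1) + log λ_β + β·𝔼[X e^{-βX}]/λ_β. Then r(2) = λ_{2β}/((ℓ−1)λ_β²) > 1, and the second moment 𝔼[Z_n²] tends to infinity as n → ∞; in particular 𝔼[Z_n²] ≥ ((ℓ−1)/ℓ)·r(2)^n for all n ≥ 1. -/

import Mathlib

open MeasureTheory Real ProbabilityTheory

/-- The Laplace transform `λ_β = 𝔼[e^{-βX}]` of the conductance law. -/
noncomputable def lam {Ω : Type*} [MeasurableSpace Ω] (P : Measure Ω) (X : Ω → ℝ) (β : ℝ) : ℝ :=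
  ∫ ω, Real.exp (-β * X ω) ∂P

/-- The annealed critical point `h_a(β) = log(ℓ-1) + log λ_β`. -/
noncomputable def annealedCP {Ω : Type*} [MeasurableSpace Ω] (P : Measure Ω) (X : Ω → ℝ)
    (ℓ : ℕ) (β : ℝ) : ℝ :=
  Real.log ((ℓ : ℝ) - 1) + Real.log (lam P X β)

/-- A (nonempty) word indexing an edge of the rooted degree-`ℓ` tree: a first letter in
`Fin ℓ` together with a list of subsequent letters in `Fin (ℓ-1)`.  The `n`-step
self-avoiding paths from the root correspond to the words of length `n` (list length
`n-1`), and the edges along such a path are the nonempty prefixes of the word. -/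
abbrev TreeWord (ℓ : ℕ) : Type := Fin ℓ × List (Fin (ℓ - 1))

/-- The normalized partition function
`Z_n = (ℓ(ℓ-1)^{n-1} λ_β^n)⁻¹ Σ_{|w|=n} exp(-β Σ_{k=1}^n X_{(w_1,…,w_k)})`, with `Z_0 = 1`.
The inner sums run over the first letter `a : Fin ℓ` and the tail `g`, and the `k`-th edge
of the path `w = (a, List.ofFn g)` is the prefix `(a, (List.ofFn g).take (k-1))`. -/
noncomputable def Zpart {Ω : Type*} (ℓ : ℕ) (β lamβ : ℝ)
    (Xf : TreeWord ℓ → Ω → ℝ) : ℕ → Ω → ℝ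
  | 0 => fun _ => 1
  | n + 1 => fun ω =>
      ((ℓ : ℝ) * ((ℓ : ℝ) - 1) ^ n * lamβ ^ (n + 1))⁻¹ *
        ∑ a : Fin ℓ, ∑ g : Fin n → Fin (ℓ - 1),
          Real.exp (-β * ∑ k ∈ Finset.range (n + 1), Xf (a, (List.ofFn g).take k) ω)

/-- Auxiliary: a sum of squares of nonnegative square-integrable functions bounds the
integral of the square of the sum from below. -/
lemma sum_sq_integral_le {Ω ι : Type*} [MeasurableSpace Ω] [Fintype ι] (P : Measure Ω)
    [IsProbabilityMeasure P]
    (e : ι → Ω → ℝ) (hnn : ∀ i ω, 0 ≤ e i ω) (hmeas : ∀ i, Measurable (e i))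
    (h2 : ∀ i, Integrable (fun ω => e i ω ^ 2) P) :
    Integrable (fun ω => (∑ i, e i ω) ^ 2) P ∧
      ∑ i, ∫ ω, e i ω ^ 2 ∂P ≤ ∫ ω, (∑ i, e i ω) ^ 2 ∂P := by
  classical
  have hcross : ∀ p q : ι, Integrable (fun ω => e p ω * e q ω) P := by
    intro p q
    refine Integrable.mono' (((h2 p).add (h2 q)).div_const 2)
      ((hmeas p).mul (hmeas q)).aestronglyMeasurable ?_
    refine Filter.Eventually.of_forall fun ω => ?_
    rw [Real.norm_eq_abs, abs_of_nonneg (mul_nonneg (hnn p ω) (hnn q ω))]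
    simp only [Pi.add_apply]
    nlinarith [sq_nonneg (e p ω - e q ω)]
  have hSqInt : Integrable (fun ω => (∑ i, e i ω) ^ 2) P := by
    have hfe : (fun ω => (∑ i, e i ω) ^ 2) = fun ω => ∑ p, ∑ q, e p ω * e q ω := by
      funext ω
      rw [sq, Finset.sum_mul_sum]
    rw [hfe]
    exact integrable_finset_sum _ fun p _ => integrable_finset_sum _ fun q _ => hcross p q
  refine ⟨hSqInt, ?_⟩
  rw [← integral_finset_sum _ fun p _ => h2 p]
  refine integral_mono (integrable_finset_sum _ fun p _ => h2 p) hSqInt fun ω => ?_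
  exact Finset.sum_sq_le_sq_sum_of_nonneg fun p _ => hnn p ω

/-- Auxiliary: the exponential of a linear functional of finitely many of the i.i.d.
variables is integrable, and its integral factorizes. -/
lemma aux_exp_sum {Ω : Type*} [MeasurableSpace Ω] (P : Measure Ω) [IsProbabilityMeasure P]
    (ℓ : ℕ) (X : Ω → ℝ)
    (hInt : ∀ s : ℝ, Integrable (fun ω => Real.exp (-s * X ω)) P)
    (Xf : TreeWord ℓ → Ω → ℝ) (hXf : ∀ w, Measurable (Xf w))
    (hindep : iIndepFun Xf P)
    (hident : ∀ w, IdentDistrib (Xf w) X P P)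
    (t : ℝ) (s : Finset (TreeWord ℓ)) :
    Integrable (fun ω => Real.exp (t * ∑ u ∈ s, Xf u ω)) P ∧
      ∫ ω, Real.exp (t * ∑ u ∈ s, Xf u ω) ∂P = (lam P X (-t)) ^ s.card := by
  have hmeas : Measurable fun x : ℝ => Real.exp (t * x) :=
    Real.measurable_exp.comp (measurable_const_mul t)
  have hid : ∀ u : TreeWord ℓ, IdentDistrib (fun ω => Real.exp (t * Xf u ω))
      (fun ω => Real.exp (t * X ω)) P P := fun u => (hident u).comp hmeas
  have hIntX : Integrable (fun ω => Real.exp (t * X ω)) P := by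
    have := hInt (-t); simpa using this
  have hintu : ∀ u, Integrable (fun ω => Real.exp (t * Xf u ω)) P := fun u =>
    (hid u).integrable_iff.mpr hIntX
  have h1 : Integrable (fun ω => Real.exp (t * (∑ u ∈ s, Xf u) ω)) P :=
    hindep.integrable_exp_mul_sum hXf (fun u _ => hintu u)
  simp only [Finset.sum_apply] at h1
  refine ⟨h1, ?_⟩
  have h2 := hindep.mgf_sum hXf s (t := t)
  have h3 : ∀ u, mgf (Xf u) P t = lam P X (-t) := by
    intro u
    have h := (hid u).integral_eq
    simp only [lam, neg_neg]
    exact h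
  calc ∫ ω, Real.exp (t * ∑ u ∈ s, Xf u ω) ∂P = mgf (∑ u ∈ s, Xf u) P t := by
        simp only [mgf, Finset.sum_apply]
    _ = ∏ u ∈ s, mgf (Xf u) P t := h2
    _ = (lam P X (-t)) ^ s.card := by
        rw [Finset.prod_congr rfl (fun u _ => h3 u), Finset.prod_const]

/-- The Boltzmann weight of the path indexed by `p`. -/
noncomputable def Epath {Ω : Type*} (ℓ m : ℕ) (β : ℝ) (Xf : TreeWord ℓ → Ω → ℝ)
    (p : Fin ℓ × (Fin m → Fin (ℓ - 1))) (ω : Ω) : ℝ :=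
  Real.exp (-β * ∑ k ∈ Finset.range (m + 1), Xf (p.1, (List.ofFn p.2).take k) ω)

/-- The set of edges (prefixes) of the path indexed by `p`. -/
noncomputable def prefSet (ℓ m : ℕ) (p : Fin ℓ × (Fin m → Fin (ℓ - 1))) :
    Finset (TreeWord ℓ) :=
  (Finset.range (m + 1)).image fun k => (p.1, (List.ofFn p.2).take k)

lemma prefSet_inj (ℓ m : ℕ) (p : Fin ℓ × (Fin m → Fin (ℓ - 1))) :
    ∀ k ∈ Finset.range (m + 1), ∀ k' ∈ Finset.range (m + 1),
      (p.1, (List.ofFn p.2).take k) = ((p.1 : Fin ℓ), (List.ofFn p.2).take k') → k = k' := by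
  intro k hk k' hk' h
  rw [Finset.mem_range, Nat.lt_succ_iff] at hk hk'
  have h2 := congrArg (fun w : TreeWord ℓ => w.2.length) h
  simpa [List.length_take, List.length_ofFn, min_eq_left hk, min_eq_left hk'] using h2

lemma prefSet_card (ℓ m : ℕ) (p : Fin ℓ × (Fin m → Fin (ℓ - 1))) :
    (prefSet ℓ m p).card = m + 1 := by
  rw [prefSet, Finset.card_image_of_injOn, Finset.card_range]
  intro k hk k' hk' h
  exact prefSet_inj ℓ m p k (by simpa using hk) k' (by simpa using hk') h

lemma Epath_sq {Ω : Type*} (ℓ m : ℕ) (β : ℝ) (Xf : TreeWord ℓ → Ω → ℝ)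
    (p : Fin ℓ × (Fin m → Fin (ℓ - 1))) (ω : Ω) :
    Epath ℓ m β Xf p ω ^ 2 = Real.exp ((-(2 * β)) * ∑ u ∈ prefSet ℓ m p, Xf u ω) := by
  rw [Epath, prefSet, Finset.sum_image (prefSet_inj ℓ m p), sq, ← Real.exp_add]
  ring_nf

/-- Auxiliary: the diagonal lower bound on the second moment of the partition function. -/
lemma aux_bound {Ω : Type*} [MeasurableSpace Ω] (P : Measure Ω)
    [IsProbabilityMeasure P] (ℓ : ℕ) (hℓ : 3 ≤ ℓ) (β : ℝ)
    (X : Ω → ℝ)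
    (hInt : ∀ s : ℝ, Integrable (fun ω => Real.exp (-s * X ω)) P)
    (Xf : TreeWord ℓ → Ω → ℝ) (hXf : ∀ w, Measurable (Xf w))
    (hindep : iIndepFun Xf P)
    (hident : ∀ w, IdentDistrib (Xf w) X P P) (m : ℕ) :
    (((ℓ : ℝ) - 1) / ℓ) * (lam P X (2 * β) / (((ℓ : ℝ) - 1) * lam P X β ^ 2)) ^ (m + 1)
      ≤ ∫ ω, (Zpart ℓ β (lam P X β) Xf (m + 1) ω) ^ 2 ∂P := by
  classical
  have hℓ0 : (0:ℝ) < (ℓ:ℝ) - 1 := by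
    have : (3:ℝ) ≤ ℓ := by exact_mod_cast hℓ
    linarith
  have hℓpos : (0:ℝ) < ℓ := by linarith
  have hlam_pos : ∀ s : ℝ, 0 < lam P X s := fun s => integral_exp_pos (hInt s)
  have hL1pos := hlam_pos β
  have hL2pos := hlam_pos (2*β)
  have hc : (0:ℝ) < (ℓ:ℝ) * ((ℓ:ℝ)-1)^m * (lam P X β)^(m+1) := by positivity
  have hE2int : ∀ p, Integrable (fun ω => Epath ℓ m β Xf p ω ^ 2) P := by
    intro p
    have := (aux_exp_sum P ℓ X hInt Xf hXf hindep hident (-(2*β)) (prefSet ℓ m p)).1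
    simp only [← Epath_sq] at this
    exact this
  have hE2val : ∀ p, ∫ ω, Epath ℓ m β Xf p ω ^ 2 ∂P = (lam P X (2*β)) ^ (m+1) := by
    intro p
    have h := (aux_exp_sum P ℓ X hInt Xf hXf hindep hident (-(2*β)) (prefSet ℓ m p)).2
    rw [neg_neg, prefSet_card] at h
    calc ∫ ω, Epath ℓ m β Xf p ω ^ 2 ∂P
        = ∫ ω, Real.exp ((-(2*β)) * ∑ u ∈ prefSet ℓ m p, Xf u ω) ∂P := by
          simp only [Epath_sq]
      _ = (lam P X (2*β)) ^ (m+1) := h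
  have hEnonneg : ∀ p (ω : Ω), 0 ≤ Epath ℓ m β Xf p ω := fun p ω => (Real.exp_pos _).le
  have hEmeas : ∀ p, Measurable (Epath ℓ m β Xf p) := by
    intro p
    apply Measurable.exp
    exact (Finset.measurable_sum _ fun k _ => hXf _).const_mul (-β)
  obtain ⟨hSqInt, hmono⟩ := sum_sq_integral_le P (Epath ℓ m β Xf) hEnonneg hEmeas hE2int
  have hZ : ∀ ω : Ω, Zpart ℓ β (lam P X β) Xf (m+1) ω
      = ((ℓ:ℝ) * ((ℓ:ℝ)-1)^m * (lam P X β)^(m+1))⁻¹ * ∑ p, Epath ℓ m β Xf p ω := by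
    intro ω
    rw [Fintype.sum_prod_type (f := fun p : Fin ℓ × (Fin m → Fin (ℓ-1)) => Epath ℓ m β Xf p ω)]
    rfl
  have hZint : ∫ ω, (Zpart ℓ β (lam P X β) Xf (m+1) ω)^2 ∂P
      = (((ℓ:ℝ) * ((ℓ:ℝ)-1)^m * (lam P X β)^(m+1))⁻¹)^2
          * ∫ ω, (∑ p, Epath ℓ m β Xf p ω)^2 ∂P := by
    rw [← integral_const_mul]
    refine integral_congr_ae (Filter.Eventually.of_forall fun ω => ?_)
    simp only
    rw [hZ ω]
    ring
  have hlhs : ∑ p, ∫ ω, Epath ℓ m β Xf p ω ^ 2 ∂P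
      = ((ℓ:ℝ) * ((ℓ:ℝ)-1)^m) * (lam P X (2*β))^(m+1) := by
    rw [Finset.sum_congr rfl fun p _ => hE2val p, Finset.sum_const, Finset.card_univ]
    have hcardP : Fintype.card (Fin ℓ × (Fin m → Fin (ℓ-1))) = ℓ * (ℓ-1)^m := by
      simp [Fintype.card_prod, Fintype.card_fun]
    rw [hcardP]
    have hcast : ((ℓ-1 : ℕ) : ℝ) = (ℓ:ℝ) - 1 := by
      have h1 : 1 ≤ ℓ := by omega
      push_cast [Nat.cast_sub h1]
      ring
    rw [nsmul_eq_mul, Nat.cast_mul, Nat.cast_pow, hcast]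
  rw [hZint]
  have hgen : ∀ K : ℝ, 0 < K →
      (K/ℓ) * (lam P X (2*β) / (K * (lam P X β)^2))^(m+1)
      = (((ℓ:ℝ) * K^m * (lam P X β)^(m+1))⁻¹)^2
          * (((ℓ:ℝ) * K^m) * (lam P X (2*β))^(m+1)) := by
    intro K hK
    have hKne := hK.ne'
    have hL1ne := hL1pos.ne'
    have hℓne := hℓpos.ne'
    rw [div_pow, mul_pow, ← pow_mul, inv_pow, mul_pow, mul_pow, ← pow_mul, ← pow_mul]
    field_simp
    ring
  calc (((ℓ:ℝ)-1)/ℓ) * (lam P X (2*β) / (((ℓ:ℝ)-1) * (lam P X β)^2))^(m+1)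
      = (((ℓ:ℝ) * ((ℓ:ℝ)-1)^m * (lam P X β)^(m+1))⁻¹)^2
          * (((ℓ:ℝ) * ((ℓ:ℝ)-1)^m) * (lam P X (2*β))^(m+1)) := hgen _ hℓ0
    _ = (((ℓ:ℝ) * ((ℓ:ℝ)-1)^m * (lam P X β)^(m+1))⁻¹)^2
          * ∑ p, ∫ ω, Epath ℓ m β Xf p ω ^ 2 ∂P := by rw [hlhs]
    _ ≤ _ := mul_le_mul_of_nonneg_left hmono (by positivity)

/-- In the strong disorder regime `f(β) < 0` one has `r(2) = λ_{2β}/((ℓ-1)λ_β²) > 1`,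
`𝔼[Z_n²] ≥ ((ℓ-1)/ℓ)·r(2)^n` for all `n ≥ 1`, and `𝔼[Z_n²] → ∞`. -/
theorem Zpart_second_moment_diverges {Ω : Type*} [MeasurableSpace Ω] (P : Measure Ω)
    [IsProbabilityMeasure P] (ℓ : ℕ) (hℓ : 3 ≤ ℓ) (β : ℝ) (hβ : 0 < β)
    (X : Ω → ℝ) (hX : Measurable X)
    (hInt : ∀ s : ℝ, Integrable (fun ω => Real.exp (-s * X ω)) P)
    (Xf : TreeWord ℓ → Ω → ℝ) (hXf : ∀ w, Measurable (Xf w))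
    (hindep : iIndepFun Xf P)
    (hident : ∀ w, IdentDistrib (Xf w) X P P)
    (hstrong : annealedCP P X ℓ β
        + β * (∫ ω, X ω * Real.exp (-β * X ω) ∂P) / lam P X β < 0) :
    1 < lam P X (2 * β) / (((ℓ : ℝ) - 1) * lam P X β ^ 2) ∧
    (∀ n : ℕ, 1 ≤ n →
      (((ℓ : ℝ) - 1) / ℓ) * (lam P X (2 * β) / (((ℓ : ℝ) - 1) * lam P X β ^ 2)) ^ n
        ≤ ∫ ω, (Zpart ℓ β (lam P X β) Xf n ω) ^ 2 ∂P) ∧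
    Filter.Tendsto (fun n => ∫ ω, (Zpart ℓ β (lam P X β) Xf n ω) ^ 2 ∂P)
      Filter.atTop Filter.atTop := by
  simp only [annealedCP] at hstrong
  have hℓ0 : (0:ℝ) < (ℓ:ℝ) - 1 := by
    have : (3:ℝ) ≤ ℓ := by exact_mod_cast hℓ
    linarith
  have hℓpos : (0:ℝ) < ℓ := by linarith
  have hlam_pos : ∀ s : ℝ, 0 < lam P X s := fun s => integral_exp_pos (hInt s)
  have hL1pos := hlam_pos β
  have hL2pos := hlam_pos (2*β)
  set L1 := lam P X β with hL1def
  set L2 := lam P X (2*β) with hL2def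
  -- Part 1: r(2) > 1
  have hXm : Integrable (fun ω => X ω * Real.exp (-β * X ω)) P := by
    refine Integrable.mono' ((hInt (β-1)).add (hInt (β+1)))
      (hX.mul ((hX.const_mul (-β)).exp)).aestronglyMeasurable ?_
    refine Filter.Eventually.of_forall (fun ω => ?_)
    have h1 : |X ω| ≤ Real.exp (X ω) + Real.exp (-X ω) := by
      rcases abs_cases (X ω) with ⟨h, _⟩ | ⟨h, _⟩ <;>
        nlinarith [Real.add_one_le_exp (X ω), Real.add_one_le_exp (-X ω),
          Real.exp_pos (X ω), Real.exp_pos (-X ω)]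
    have h2 : ‖X ω * Real.exp (-β * X ω)‖ = |X ω| * Real.exp (-β * X ω) := by
      rw [norm_mul, Real.norm_eq_abs, Real.norm_eq_abs, abs_of_pos (Real.exp_pos _)]
    rw [h2]
    calc |X ω| * Real.exp (-β * X ω)
        ≤ (Real.exp (X ω) + Real.exp (-X ω)) * Real.exp (-β * X ω) :=
          mul_le_mul_of_nonneg_right h1 (Real.exp_pos _).le
      _ = Real.exp (-(β-1) * X ω) + Real.exp (-(β+1) * X ω) := by
          rw [add_mul, ← Real.exp_add, ← Real.exp_add]; ring_nf
  set m := ∫ ω, X ω * Real.exp (-β * X ω) ∂P with hmdef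
  set t := -β * m / L1 with htdef
  have hA : Real.log ((ℓ:ℝ)-1) + Real.log L1 < t := by
    have ht' : t = -(β * m / L1) := by rw [htdef]; ring
    linarith [hstrong, ht'.symm ▸ (le_refl t)]
  have hkey : ((ℓ:ℝ)-1) * L1 * L1 < L2 := by
    have hpt : ∀ ω, Real.exp t * ((1 - t) * Real.exp (-β * X ω)
        - β * (X ω * Real.exp (-β * X ω))) ≤ Real.exp (-(2*β) * X ω) := by
      intro ω
      have h1 : (-β * X ω - t) + 1 ≤ Real.exp (-β * X ω - t) := Real.add_one_le_exp _
      have h2 : Real.exp (-β*X ω + t) * ((-β*X ω - t) + 1)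
          ≤ Real.exp (-β*X ω + t) * Real.exp (-β*X ω - t) :=
        mul_le_mul_of_nonneg_left h1 (Real.exp_pos _).le
      rw [← Real.exp_add] at h2
      calc Real.exp t * ((1 - t) * Real.exp (-β * X ω) - β * (X ω * Real.exp (-β * X ω)))
          = Real.exp (-β*X ω + t) * ((-β*X ω - t) + 1) := by
            rw [Real.exp_add]; ring
        _ ≤ Real.exp (-β*X ω + t + (-β*X ω - t)) := h2
        _ = Real.exp (-(2*β) * X ω) := by ring_nf
    have hint1 : Integrable (fun ω => Real.exp t * ((1-t) * Real.exp (-β * X ω)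
        - β * (X ω * Real.exp (-β * X ω)))) P :=
      (((hInt β).const_mul (1-t)).sub (hXm.const_mul β)).const_mul _
    have hmono := integral_mono hint1 (hInt (2*β)) hpt
    rw [integral_const_mul, integral_sub ((hInt β).const_mul _) (hXm.const_mul β),
      integral_const_mul, integral_const_mul] at hmono
    have hL1 : ∫ ω, Real.exp (-β * X ω) ∂P = L1 := rfl
    rw [hL1, ← hmdef] at hmono
    have htm : β * m = -t * L1 := by
      rw [htdef]; field_simp
    have h3 : Real.exp t * L1 ≤ L2 := by
      have heq : Real.exp t * ((1 - t) * L1 - β * m) = Real.exp t * L1 := by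
        rw [htm]; ring
      rw [heq] at hmono
      exact hmono
    have h4 : ((ℓ:ℝ)-1) * L1 < Real.exp t := by
      calc ((ℓ:ℝ)-1)*L1 = Real.exp (Real.log ((ℓ:ℝ)-1) + Real.log L1) := by
            rw [Real.exp_add, Real.exp_log hℓ0, Real.exp_log hL1pos]
        _ < Real.exp t := Real.exp_lt_exp.mpr hA
    nlinarith
  have hr : 1 < L2 / (((ℓ:ℝ)-1) * L1^2) := by
    rw [lt_div_iff₀ (by positivity)]
    nlinarith
  -- Part 2: the lower bound
  have hbound : ∀ n : ℕ, 1 ≤ n →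
      (((ℓ:ℝ)-1)/ℓ) * (L2 / (((ℓ:ℝ)-1) * L1^2))^n
        ≤ ∫ ω, (Zpart ℓ β L1 Xf n ω)^2 ∂P := by
    intro n hn
    obtain ⟨k, rfl⟩ : ∃ k, n = k + 1 := ⟨n-1, (Nat.succ_pred_eq_of_pos hn).symm⟩
    exact aux_bound P ℓ hℓ β X hInt Xf hXf hindep hident k
  refine ⟨hr, hbound, ?_⟩
  -- Part 3: divergence
  have htend : Filter.Tendsto (fun n : ℕ => (((ℓ:ℝ)-1)/ℓ) * (L2 / (((ℓ:ℝ)-1) * L1^2))^n)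
      Filter.atTop Filter.atTop :=
    Filter.Tendsto.const_mul_atTop (by positivity) (tendsto_pow_atTop_atTop_of_one_lt hr)
  refine Filter.tendsto_atTop_mono' _ ?_ htend
  filter_upwards [Filter.eventually_ge_atTop 1] with n hn using hbound n hn
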